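/- For all integers m₀, m₁ with 0 ≤ m₀ ≤ n−k−1 and 1 ≤ m₁ ≤ k−1, the matching V is acyclic: there is no nontrivial closed V-path a₀, b₀, a₁, …, b_r, a_{r+1} with r ≥ 0 and a₀ = a_{r+1}. -/
import Mathlib


set_option linter.unusedVariables false

/-- The alphabet `{0, 1, ∗}` for face sequences. -/
inductive Letter : Type
  | zero
  | one
  | star
  deriving DecidableEq

/-- A sequence of length `n` over the alphabet `{0, 1, ∗}`. -/
abbrev FSeq (n : ℕ) := Fin n → Letter

/-- `S(1)`, the number of `1`'s in `S`. -/
def count1 {n : ℕ} (S : FSeq n) : ℕ := (Finset.univ.filter fun i => S i = Letter.one).card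

/-- `S(0)`, the number of `0`'s in `S`. -/
def count0 {n : ℕ} (S : FSeq n) : ℕ := (Finset.univ.filter fun i => S i = Letter.zero).card

/-- The number of `∗`'s in `S`. -/
def countStar {n : ℕ} (S : FSeq n) : ℕ := (Finset.univ.filter fun i => S i = Letter.star).card

/-- A face sequence: either no `∗` and exactly `k` ones, or at most `k-1` ones and
(#ones) + (#stars) ≥ `k+1`. -/
def FaceSeq {n : ℕ} (k : ℕ) (S : FSeq n) : Prop :=
  (countStar S = 0 ∧ count1 S = k) ∨ (count1 S + 1 ≤ k ∧ k + 1 ≤ count1 S + countStar S)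

/-- `v₀`, the sequence of `k` ones followed by `n - k` zeros. -/
def v0seq (n k : ℕ) : FSeq n := fun i => if (i : ℕ) < k then Letter.one else Letter.zero

/-- `S` contains at least one `∗`. -/
def hasStar {n : ℕ} (S : FSeq n) : Prop := ∃ i, S i = Letter.star

/-- There is a `1` to the right of the rightmost `∗` (in particular `S` contains a `∗`). -/
def OneRight {n : ℕ} (S : FSeq n) : Prop :=
  hasStar S ∧ ∃ i, S i = Letter.one ∧ ∀ j, i < j → S j ≠ Letter.star

/-- There is no `1` to the right of the rightmost `∗` (and `S` contains a `∗`). -/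
def NoOneRight {n : ℕ} (S : FSeq n) : Prop :=
  hasStar S ∧ ∀ i, S i = Letter.one → ∃ j, i < j ∧ S j = Letter.star

/-- There is a `0` to the left of the leftmost `∗` (in particular `S` contains a `∗`). -/
def ZeroLeft {n : ℕ} (S : FSeq n) : Prop :=
  hasStar S ∧ ∃ i, S i = Letter.zero ∧ ∀ j, j < i → S j ≠ Letter.star

/-- There is no `0` to the left of the leftmost `∗` (and `S` contains a `∗`). -/
def NoZeroLeft {n : ℕ} (S : FSeq n) : Prop :=
  hasStar S ∧ ∀ i, S i = Letter.zero → ∃ j, j < i ∧ S j = Letter.star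

/-- `i` is the position of the rightmost `1` of `S`. -/
def IsRightmostOne {n : ℕ} (S : FSeq n) (i : Fin n) : Prop :=
  S i = Letter.one ∧ ∀ j, i < j → S j ≠ Letter.one

/-- `i` is the position of the rightmost `∗` of `S`. -/
def IsRightmostStar {n : ℕ} (S : FSeq n) (i : Fin n) : Prop :=
  S i = Letter.star ∧ ∀ j, i < j → S j ≠ Letter.star

/-- `i` is the position of the leftmost `0` of `S`. -/
def IsLeftmostZero {n : ℕ} (S : FSeq n) (i : Fin n) : Prop :=
  S i = Letter.zero ∧ ∀ j, j < i → S j ≠ Letter.zero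

/-- `i` is the position of the leftmost `∗` of `S`. -/
def IsLeftmostStar {n : ℕ} (S : FSeq n) (i : Fin n) : Prop :=
  S i = Letter.star ∧ ∀ j, j < i → S j ≠ Letter.star

/-- Condition of rule (1), subcondition (a). -/
def Cond1a {n : ℕ} (k m0 m1 : ℕ) (S : FSeq n) : Prop :=
  count1 S + 1 ≤ k ∧ OneRight S ∧ count1 S ≠ m1

/-- Condition of rule (1), subcondition (b). -/
def Cond1b {n : ℕ} (k m0 m1 : ℕ) (S : FSeq n) : Prop :=
  count1 S + 1 ≤ k ∧ OneRight S ∧ count1 S = m1 ∧ m0 < count0 S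

/-- Condition of rule (1), subcondition (c): no `0` to the left of the leftmost `∗`. -/
def Cond1c {n : ℕ} (k m0 m1 : ℕ) (S : FSeq n) : Prop :=
  count1 S + 1 ≤ k ∧ OneRight S ∧ count1 S = m1 ∧ count0 S = m0 ∧ NoZeroLeft S

/-- Condition of rule (2), subcondition (a): here `count1 S + 1 ≠ m1` encodes `S(1) ≠ m₁ - 1`. -/
def Cond2a {n : ℕ} (k m0 m1 : ℕ) (S : FSeq n) : Prop :=
  count1 S + 2 ≤ k ∧ NoOneRight S ∧ count1 S + 1 ≠ m1

/-- Condition of rule (2), subcondition (b). -/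
def Cond2b {n : ℕ} (k m0 m1 : ℕ) (S : FSeq n) : Prop :=
  count1 S + 2 ≤ k ∧ NoOneRight S ∧ count1 S + 1 = m1 ∧ m0 < count0 S

/-- Condition of rule (2), subcondition (c). -/
def Cond2c {n : ℕ} (k m0 m1 : ℕ) (S : FSeq n) : Prop :=
  count1 S + 2 ≤ k ∧ NoOneRight S ∧ count1 S + 1 = m1 ∧ count0 S = m0 ∧ NoZeroLeft S

/-- `S` is of type 1 (satisfies the condition of rule (1)). -/
def Type1 {n : ℕ} (k m0 m1 : ℕ) (S : FSeq n) : Prop :=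
  Cond1a k m0 m1 S ∨ Cond1b k m0 m1 S ∨ Cond1c k m0 m1 S

/-- `S` is of type 2 (satisfies the condition of rule (2)). -/
def Type2 {n : ℕ} (k m0 m1 : ℕ) (S : FSeq n) : Prop :=
  Cond2a k m0 m1 S ∨ Cond2b k m0 m1 S ∨ Cond2c k m0 m1 S

/-- `S` is of type 3: `S(1) = k-1`, `S(0) ≤ n-k-1`, no `1` right of the rightmost `∗`,
a `0` left of the leftmost `∗`. -/
def Type3 {n : ℕ} (k : ℕ) (S : FSeq n) : Prop :=
  count1 S + 1 = k ∧ count0 S + k + 1 ≤ n ∧ NoOneRight S ∧ ZeroLeft S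

/-- `S` is of type 4: `S(1) = k-1`, `S(0) ≤ n-k-2`, no `1` right of the rightmost `∗`,
no `0` left of the leftmost `∗`. -/
def Type4 {n : ℕ} (k : ℕ) (S : FSeq n) : Prop :=
  count1 S + 1 = k ∧ count0 S + k + 2 ≤ n ∧ NoOneRight S ∧ NoZeroLeft S

/-- `S` is of type 5: `S(1) = m₁`, `S(0) ≤ m₀`, a `1` right of the rightmost `∗`,
a `0` left of the leftmost `∗`. -/
def Type5 {n : ℕ} (m0 m1 : ℕ) (S : FSeq n) : Prop :=
  count1 S = m1 ∧ count0 S ≤ m0 ∧ OneRight S ∧ ZeroLeft S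

/-- `S` is of type 6: `S(1) = m₁`, `S(0) < m₀`, a `1` right of the rightmost `∗`,
no `0` left of the leftmost `∗`. -/
def Type6 {n : ℕ} (m0 m1 : ℕ) (S : FSeq n) : Prop :=
  count1 S = m1 ∧ count0 S < m0 ∧ OneRight S ∧ NoZeroLeft S

/-- `S` is of type 7: `S(1) = m₁-1`, `S(0) ≤ m₀`, no `1` right of the rightmost `∗`,
a `0` left of the leftmost `∗`. -/
def Type7 {n : ℕ} (m0 m1 : ℕ) (S : FSeq n) : Prop :=
  count1 S + 1 = m1 ∧ count0 S ≤ m0 ∧ NoOneRight S ∧ ZeroLeft S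

/-- `S` is of type 8: `S(1) = m₁-1`, `S(0) < m₀`, no `1` right of the rightmost `∗`,
no `0` left of the leftmost `∗`. -/
def Type8 {n : ℕ} (m0 m1 : ℕ) (S : FSeq n) : Prop :=
  count1 S + 1 = m1 ∧ count0 S < m0 ∧ NoOneRight S ∧ NoZeroLeft S

/-- `S` is of type 9: `S(1) = k`, `S(0) = n-k`, and `S ≠ v₀`. -/
def Type9 {n : ℕ} (k : ℕ) (S : FSeq n) : Prop :=
  count1 S = k ∧ count0 S + k = n ∧ S ≠ v0seq n k

/-- `S` is of type 10: `S(1) = k-1`, `S(0) = n-k-1`, no `1` right of the rightmost `∗`,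
no `0` left of the leftmost `∗`. -/
def Type10 {n : ℕ} (k : ℕ) (S : FSeq n) : Prop :=
  count1 S + 1 = k ∧ count0 S + k + 1 = n ∧ NoOneRight S ∧ NoZeroLeft S

/-- `S` is of type `i` for `1 ≤ i ≤ 10` (and of no type otherwise). -/
def OfType {n : ℕ} (k m0 m1 : ℕ) (i : ℕ) (S : FSeq n) : Prop :=
  match i with
  | 1 => Type1 k m0 m1 S
  | 2 => Type2 k m0 m1 S
  | 3 => Type3 k S
  | 4 => Type4 k S
  | 5 => Type5 m0 m1 S
  | 6 => Type6 m0 m1 S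
  | 7 => Type7 m0 m1 S
  | 8 => Type8 m0 m1 S
  | 9 => Type9 k S
  | 10 => Type10 k S
  | _ => False

/-- The replacement of rule (1): replace the rightmost `1` with `∗`. -/
def Apply1 {n : ℕ} (S S' : FSeq n) : Prop :=
  ∃ i, IsRightmostOne S i ∧ S' = Function.update S i Letter.star

/-- The replacement of rule (2): replace the rightmost `∗` with `1`. -/
def Apply2 {n : ℕ} (S S' : FSeq n) : Prop :=
  ∃ i, IsRightmostStar S i ∧ S' = Function.update S i Letter.one

/-- The replacement of rules (3), (5) and (7): replace the leftmost `0` with `∗`. -/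
def Apply3 {n : ℕ} (S S' : FSeq n) : Prop :=
  ∃ i, IsLeftmostZero S i ∧ S' = Function.update S i Letter.star

/-- The replacement of rules (4), (6) and (8): replace the leftmost `∗` with `0`. -/
def Apply4 {n : ℕ} (S S' : FSeq n) : Prop :=
  ∃ i, IsLeftmostStar S i ∧ S' = Function.update S i Letter.zero

/-- The replacement of rule (9): replace the leftmost `0` and the rightmost `1` each with `∗`. -/
def Apply9 {n : ℕ} (S S' : FSeq n) : Prop :=
  ∃ i j, IsLeftmostZero S i ∧ IsRightmostOne S j ∧
    S' = Function.update (Function.update S i Letter.star) j Letter.star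

/-- The replacement of rule (10): replace the leftmost `∗` with `0` and the other `∗` with `1`. -/
def Apply10 {n : ℕ} (S S' : FSeq n) : Prop :=
  ∃ i j, IsLeftmostStar S i ∧ IsRightmostStar S j ∧ i ≠ j ∧
    S' = Function.update (Function.update S i Letter.zero) j Letter.one

/-- The matching `V` on face sequences: a face sequence `S` of type 1, 3, 5, 7 or 9 is
matched with the result `S'` of applying the corresponding rule to it. -/
def Vmatch {n : ℕ} (k m0 m1 : ℕ) (S S' : FSeq n) : Prop :=
  FaceSeq k S ∧
    ((Type1 k m0 m1 S ∧ Apply1 S S') ∨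
     (Type3 k S ∧ Apply3 S S') ∨
     (Type5 m0 m1 S ∧ Apply3 S S') ∨
     (Type7 m0 m1 S ∧ Apply3 S S') ∨
     (Type9 k S ∧ Apply9 S S'))

/-- The vertex set of a face sequence `S`: the vertex sequences (0/1-sequences with
exactly `k` ones) agreeing with `S` wherever `S` is not `∗`. -/
def VertexSet {n : ℕ} (k : ℕ) (S : FSeq n) : Set (FSeq n) :=
  {v | (∀ i, v i ≠ Letter.star) ∧ count1 v = k ∧ ∀ i, S i ≠ Letter.star → v i = S i}

/-- The dimension of the face `F(S)`. -/
def fdim {n : ℕ} (S : FSeq n) : ℕ :=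
  if countStar S = 0 then 0 else countStar S - 1

/-- `T` is a codimension-1 face of `S`. -/
def Codim1 {n : ℕ} (k : ℕ) (T S : FSeq n) : Prop :=
  VertexSet k T ⊂ VertexSet k S ∧ fdim T + 1 = fdim S

/-- A (nontrivial) `V`-path `a₀, b₀, a₁, b₁, …, b_r, a_{r+1}` of face sequences. -/
structure VPath (n k m0 m1 r : ℕ) where
  a : Fin (r + 2) → FSeq n
  b : Fin (r + 1) → FSeq n
  face_a : ∀ i, FaceSeq k (a i)
  face_b : ∀ i, FaceSeq k (b i)
  mem : ∀ i : Fin (r + 1), Vmatch k m0 m1 (a i.castSucc) (b i)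
  codim_left : ∀ i : Fin (r + 1), Codim1 k (a i.castSucc) (b i)
  codim_right : ∀ i : Fin (r + 1), Codim1 k (a i.succ) (b i)
  step_ne : ∀ i : Fin (r + 1), a i.castSucc ≠ a i.succ

section Infra
open Finset

variable {n : ℕ}

lemma letter_cases (l : Letter) : l = Letter.zero ∨ l = Letter.one ∨ l = Letter.star := by
  cases l <;> simp

/-- generic count -/
def cnt (c : Letter) {n : ℕ} (S : FSeq n) : ℕ := (univ.filter fun i => S i = c).card

/-- generic position sum -/
def psum (c : Letter) {n : ℕ} (S : FSeq n) : ℕ :=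
  ∑ i ∈ univ.filter (fun i => S i = c), (i : ℕ)

lemma count1_eq (S : FSeq n) : count1 S = cnt Letter.one S := rfl
lemma count0_eq (S : FSeq n) : count0 S = cnt Letter.zero S := rfl
lemma countStar_eq (S : FSeq n) : countStar S = cnt Letter.star S := rfl

lemma filter_update (S : FSeq n) (p : Fin n) (v c : Letter) :
    (univ.filter fun i => Function.update S p v i = c) =
      if v = c then insert p (univ.filter fun i => S i = c)
      else (univ.filter fun i => S i = c).erase p := by
  split_ifs with h
  · subst h
    ext x
    simp only [mem_filter, mem_univ, true_and, mem_insert]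
    rcases eq_or_ne x p with rfl | hx
    · simp
    · simp [Function.update_of_ne hx, hx]
  · ext x
    simp only [mem_filter, mem_univ, true_and, mem_erase]
    rcases eq_or_ne x p with rfl | hx
    · simp [h]
    · simp [Function.update_of_ne hx, hx]

lemma cnt_update_mem {S : FSeq n} {p : Fin n} {c v : Letter} (h : S p = c) (hv : v ≠ c) :
    cnt c (Function.update S p v) + 1 = cnt c S := by
  unfold cnt
  rw [filter_update, if_neg hv, Finset.card_erase_add_one (by simp [h])]

lemma cnt_update_new {S : FSeq n} {p : Fin n} {c v : Letter} (h : S p ≠ c) (hv : v = c) :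
    cnt c (Function.update S p v) = cnt c S + 1 := by
  unfold cnt
  rw [filter_update, if_pos hv, Finset.card_insert_of_notMem (by simp [h])]

lemma cnt_update_ne {S : FSeq n} {p : Fin n} {c v : Letter} (h : S p ≠ c) (hv : v ≠ c) :
    cnt c (Function.update S p v) = cnt c S := by
  unfold cnt
  rw [filter_update, if_neg hv, Finset.erase_eq_of_notMem (by simp [h])]

lemma psum_update_mem {S : FSeq n} {p : Fin n} {c v : Letter} (h : S p = c) (hv : v ≠ c) :
    psum c (Function.update S p v) + (p : ℕ) = psum c S := by
  unfold psum
  rw [filter_update, if_neg hv]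
  exact Finset.sum_erase_add _ _ (by simp [h])

lemma psum_update_new {S : FSeq n} {p : Fin n} {c v : Letter} (h : S p ≠ c) (hv : v = c) :
    psum c (Function.update S p v) = psum c S + (p : ℕ) := by
  unfold psum
  rw [filter_update, if_pos hv, Finset.sum_insert (by simp [h]), add_comm]

lemma psum_update_ne {S : FSeq n} {p : Fin n} {c v : Letter} (h : S p ≠ c) (hv : v ≠ c) :
    psum c (Function.update S p v) = psum c S := by
  unfold psum
  rw [filter_update, if_neg hv, Finset.erase_eq_of_notMem (by simp [h])]

lemma cnt_partition (S : FSeq n) :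
    cnt Letter.zero S + cnt Letter.one S + cnt Letter.star S = n := by
  classical
  unfold cnt
  have h1 : (univ.filter fun i => S i = Letter.zero) ∪
      ((univ.filter fun i => S i = Letter.one) ∪ (univ.filter fun i => S i = Letter.star)) =
      univ := by
    ext x
    simp only [mem_union, mem_filter, mem_univ, true_and, iff_true]
    exact letter_cases (S x)
  have hd2 : Disjoint (univ.filter fun i => S i = Letter.one)
      (univ.filter fun i => S i = Letter.star) := by
    rw [Finset.disjoint_left]
    intro x hx hx'
    simp only [mem_filter] at hx hx'
    rw [hx.2] at hx'
    exact absurd hx'.2 (by simp)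
  have hd1 : Disjoint (univ.filter fun i => S i = Letter.zero)
      ((univ.filter fun i => S i = Letter.one) ∪ (univ.filter fun i => S i = Letter.star)) := by
    rw [Finset.disjoint_left]
    intro x hx hx'
    simp only [mem_filter, mem_union] at hx hx'
    rcases hx' with ⟨h⟩ | ⟨h⟩ <;> · rw [hx.2] at * ; simp_all
  have := Finset.card_union_of_disjoint hd1
  rw [h1] at this
  rw [Finset.card_union_of_disjoint hd2] at this
  simpa [add_assoc] using this.symm

lemma hasStar_iff (S : FSeq n) : hasStar S ↔ cnt Letter.star S ≠ 0 := by
  unfold hasStar cnt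
  rw [Ne, Finset.card_eq_zero, ← Finset.not_nonempty_iff_eq_empty, not_not,
    Finset.filter_nonempty_iff]
  constructor
  · rintro ⟨i, hi⟩; exact ⟨i, mem_univ i, hi⟩
  · rintro ⟨i, _, hi⟩; exact ⟨i, hi⟩

lemma no_star_of_cnt_zero {S : FSeq n} (h : cnt Letter.star S = 0) (i : Fin n) :
    S i ≠ Letter.star := by
  intro hi
  exact absurd h ((hasStar_iff S).mp ⟨i, hi⟩)

/-- rightmost star position (0 if none) -/
def rsN {n : ℕ} (S : FSeq n) : ℕ := (univ.filter fun i => S i = Letter.star).sup fun i => (i : ℕ)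

lemma le_rsN {S : FSeq n} {j : Fin n} (h : S j = Letter.star) : (j : ℕ) ≤ rsN S :=
  Finset.le_sup (by simp [h])

lemma rsN_le {S : FSeq n} {m : ℕ} (h : ∀ j : Fin n, S j = Letter.star → (j : ℕ) ≤ m) :
    rsN S ≤ m :=
  Finset.sup_le (fun j hj => h j (by simpa using hj))

lemma rsN_congr {S T : FSeq n} (h : ∀ i, S i = Letter.star ↔ T i = Letter.star) :
    rsN S = rsN T := by
  unfold rsN
  congr 1
  ext x
  simp [h]

lemma psum_le (c : Letter) (S : FSeq n) : psum c S ≤ n * n := by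
  unfold psum
  calc ∑ i ∈ univ.filter (fun i => S i = c), (i : ℕ)
      ≤ ∑ _i ∈ univ.filter (fun i => S i = c), n := by
        apply Finset.sum_le_sum
        intro i _
        exact le_of_lt i.isLt
    _ = (univ.filter (fun i => S i = c)).card * n := by rw [Finset.sum_const, smul_eq_mul]
    _ ≤ n * n := by
        apply Nat.mul_le_mul_right
        calc (univ.filter (fun i => S i = c)).card ≤ (univ : Finset (Fin n)).card :=
              Finset.card_filter_le _ _
          _ = n := by simp

end Infra
section Preds
open Finset

variable {n : ℕ}

lemma oneRight_noOneRight {S : FSeq n} (h1 : OneRight S) (h2 : NoOneRight S) : False := by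
  obtain ⟨_, i, hi, hno⟩ := h1
  obtain ⟨j, hj, hjs⟩ := h2.2 i hi
  exact hno j hj hjs

lemma zeroLeft_noZeroLeft {S : FSeq n} (h1 : ZeroLeft S) (h2 : NoZeroLeft S) : False := by
  obtain ⟨_, i, hi, hno⟩ := h1
  obtain ⟨j, hj, hjs⟩ := h2.2 i hi
  exact hno j hj hjs

/-- if `ZeroLeft S` and `l` is the leftmost zero, every star of `S` is right of `l` -/
lemma star_gt_of_zeroLeft {S : FSeq n} {l : Fin n} (hl : IsLeftmostZero S l)
    (hZ : ZeroLeft S) {j : Fin n} (hj : S j = Letter.star) : l < j := by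
  obtain ⟨_, z, hz, hzs⟩ := hZ
  have hlz : l ≤ z := by
    by_contra hc
    exact hl.2 z (lt_of_not_ge hc) hz
  have hjz : ¬ j < z := fun hc => hzs j hc hj
  have : l ≠ j := fun he => by rw [← he] at hj; rw [hl.1] at hj; exact absurd hj (by simp)
  exact lt_of_le_of_ne (le_trans hlz (le_of_not_gt hjz)) this

/-- if `OneRight S` and `p` is the rightmost one, every star of `S` is left of `p` -/
lemma star_lt_of_oneRight {S : FSeq n} {p : Fin n} (hp : IsRightmostOne S p)
    (hO : OneRight S) {j : Fin n} (hj : S j = Letter.star) : j < p := by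
  obtain ⟨_, o, ho, hos⟩ := hO
  have hop : o ≤ p := by
    by_contra hc
    exact hp.2 o (lt_of_not_ge hc) ho
  have hjo : ¬ o < j := fun hc => hos j hc hj
  have : j ≠ p := fun he => by rw [he] at hj; rw [hp.1] at hj; exact absurd hj (by simp)
  exact lt_of_le_of_ne (le_trans (le_of_not_gt hjo) hop) this

lemma zero_ge_leftmost {S : FSeq n} {l i : Fin n} (hl : IsLeftmostZero S l)
    (hi : S i = Letter.zero) : l ≤ i := by
  by_contra hc
  exact hl.2 i (lt_of_not_ge hc) hi

lemma one_le_rightmost {S : FSeq n} {p i : Fin n} (hp : IsRightmostOne S p)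
    (hi : S i = Letter.one) : i ≤ p := by
  by_contra hc
  exact hp.2 i (lt_of_not_ge hc) hi

/-- after replacing the leftmost zero `l` with a star and a star `w ≠ l` with any value,
there is no zero left of the leftmost star -/
lemma noZeroLeft_update {S : FSeq n} {l w : Fin n} {v : Letter}
    (hl : IsLeftmostZero S l) (hZ : ZeroLeft S) (hw : S w = Letter.star) (hwl : w ≠ l) :
    NoZeroLeft (Function.update (Function.update S l Letter.star) w v) := by
  have hlw : l < w := star_gt_of_zeroLeft hl hZ hw
  have hstar : Function.update (Function.update S l Letter.star) w v l = Letter.star := by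
    rw [Function.update_of_ne (show l ≠ w from ne_of_lt hlw), Function.update_self]
  constructor
  · exact ⟨l, hstar⟩
  · intro i hi
    refine ⟨l, ?_, hstar⟩
    rcases eq_or_ne i w with rfl | hiw
    · exact hlw
    · rw [Function.update_of_ne hiw] at hi
      rcases eq_or_ne i l with rfl | hil
      · rw [Function.update_self] at hi; exact absurd hi (by simp)
      · rw [Function.update_of_ne hil] at hi
        exact lt_of_le_of_ne (zero_ge_leftmost hl hi) (Ne.symm hil)

/-- after replacing the rightmost one `p` with a star and a position `q ≠ p` with any value
`v`, where `q < p`, there is no one right of the rightmost star -/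
lemma noOneRight_update {S : FSeq n} {p q : Fin n} {v : Letter}
    (hp : IsRightmostOne S p) (hqp : q < p) :
    NoOneRight (Function.update (Function.update S p Letter.star) q v) := by
  have hne : p ≠ q := (ne_of_lt hqp).symm
  have hstar : Function.update (Function.update S p Letter.star) q v p = Letter.star := by
    rw [Function.update_of_ne hne, Function.update_self]
  constructor
  · exact ⟨p, hstar⟩
  · intro i hi
    refine ⟨p, ?_, hstar⟩
    rcases eq_or_ne i q with rfl | hiq
    · exact hqp
    · rw [Function.update_of_ne hiq] at hi
      rcases eq_or_ne i p with rfl | hip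
      · rw [Function.update_self] at hi; exact absurd hi (by simp)
      · rw [Function.update_of_ne hip] at hi
        exact lt_of_le_of_ne (one_le_rightmost hp hi) hip

/-- updating the leftmost zero to one, when `NoOneRight` holds and a star exists right of
`l`, preserves `NoOneRight` -/
lemma noOneRight_update_one {S : FSeq n} {l : Fin n}
    (hl : S l = Letter.zero) (hN : NoOneRight S) (hZ : ZeroLeft S)
    (hlm : IsLeftmostZero S l) :
    NoOneRight (Function.update S l Letter.one) := by
  obtain ⟨j0, hj0⟩ := hN.1
  have hlj0 : l < j0 := star_gt_of_zeroLeft hlm hZ hj0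
  have hj0l : j0 ≠ l := (ne_of_lt hlj0).symm
  constructor
  · exact ⟨j0, by rw [Function.update_of_ne hj0l]; exact hj0⟩
  · intro i hi
    rcases eq_or_ne i l with rfl | hil
    · exact ⟨j0, hlj0, by rw [Function.update_of_ne hj0l]; exact hj0⟩
    · rw [Function.update_of_ne hil] at hi
      obtain ⟨j, hj, hjs⟩ := hN.2 i hi
      have hjl : j ≠ l := by
        intro he; rw [he, hl] at hjs; exact absurd hjs (by simp)
      exact ⟨j, hj, by rw [Function.update_of_ne hjl]; exact hjs⟩

end Preds

section Mu
open Finset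

variable {n : ℕ}

/-- the potential: a type-5 face is charged `2·(rightmost star) + 1` -/
noncomputable def phi (m0 m1 : ℕ) {n : ℕ} (S : FSeq n) : ℕ :=
  @ite _ (Type5 m0 m1 S) (Classical.dec _) (2 * rsN S + 1) 0

lemma phi_of_type5 {m0 m1 : ℕ} {S : FSeq n} (h : Type5 m0 m1 S) :
    phi m0 m1 S = 2 * rsN S + 1 := by
  unfold phi
  rw [if_pos h]

lemma phi_of_not_type5 {m0 m1 : ℕ} {S : FSeq n} (h : ¬ Type5 m0 m1 S) :
    phi m0 m1 S = 0 := by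
  unfold phi
  rw [if_neg h]

lemma phi_le {m0 m1 : ℕ} {S : FSeq n} {m : ℕ} (h : rsN S ≤ m) :
    phi m0 m1 S ≤ 2 * m + 1 := by
  unfold phi
  split_ifs with hh
  · omega
  · omega

/-- the first (main) component of the measure -/
noncomputable def fstc (m0 m1 : ℕ) {n : ℕ} (S : FSeq n) : ℕ :=
  2 * psum Letter.one S + phi m0 m1 S

/-- the full measure -/
noncomputable def mu (m0 m1 : ℕ) {n : ℕ} (S : FSeq n) : ℕ :=
  fstc m0 m1 S * (n * n + 1) + (n * n - psum Letter.zero S)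

lemma mu_lt_of_fst_lt {m0 m1 : ℕ} {S T : FSeq n} (h : fstc m0 m1 T < fstc m0 m1 S) :
    mu m0 m1 T < mu m0 m1 S := by
  unfold mu
  have hB : psum Letter.zero T ≤ n * n := psum_le _ _
  have h1 : fstc m0 m1 T * (n * n + 1) + (n * n + 1) ≤ fstc m0 m1 S * (n * n + 1) := by
    calc fstc m0 m1 T * (n * n + 1) + (n * n + 1) = (fstc m0 m1 T + 1) * (n * n + 1) := by ring
      _ ≤ fstc m0 m1 S * (n * n + 1) := Nat.mul_le_mul_right _ (by omega)
  omega

lemma mu_lt_of_fst_eq {m0 m1 : ℕ} {S T : FSeq n} (h : fstc m0 m1 T = fstc m0 m1 S)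
    (h2 : psum Letter.zero S < psum Letter.zero T) :
    mu m0 m1 T < mu m0 m1 S := by
  unfold mu
  rw [h]
  have hB : psum Letter.zero T ≤ n * n := psum_le _ _
  omega

end Mu
section Fill
open Finset

variable {n k : ℕ}

lemma countStar_card (S : FSeq n) :
    countStar S = (univ.filter fun i => S i = Letter.star).card := rfl

lemma count1_card (S : FSeq n) :
    count1 S = (univ.filter fun i => S i = Letter.one).card := rfl

/-- building a vertex of `S` by filling a set `A` of stars with ones and the rest with zeros -/
lemma vertex_of_fill {S : FSeq n} {A : Finset (Fin n)}
    (hA : ∀ i ∈ A, S i = Letter.star) (hcard : count1 S + A.card = k) :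
    (fun i => if i ∈ A then Letter.one else
      if S i = Letter.star then Letter.zero else S i) ∈ VertexSet k S := by
  classical
  set v : FSeq n := fun i => if i ∈ A then Letter.one else
      if S i = Letter.star then Letter.zero else S i with hv
  have hvA : ∀ i ∈ A, v i = Letter.one := by
    intro i hi; rw [hv]; simp only [if_pos hi]
  have hvS : ∀ i ∉ A, S i = Letter.star → v i = Letter.zero := by
    intro i hi hs; rw [hv]; simp only [if_neg hi, if_pos hs]
  have hvE : ∀ i ∉ A, S i ≠ Letter.star → v i = S i := by
    intro i hi hs; rw [hv]; simp only [if_neg hi, if_neg hs]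
  refine ⟨?_, ?_, ?_⟩
  · intro i hi
    by_cases h1 : i ∈ A
    · rw [hvA i h1] at hi; exact absurd hi (by simp)
    · by_cases h2 : S i = Letter.star
      · rw [hvS i h1 h2] at hi; exact absurd hi (by simp)
      · rw [hvE i h1 h2] at hi; exact h2 hi
  · have hset : (univ.filter fun i => v i = Letter.one) =
        (univ.filter fun i => S i = Letter.one) ∪ A := by
      ext x
      simp only [mem_filter, mem_univ, true_and, mem_union]
      by_cases h1 : x ∈ A
      · simp only [hvA x h1, h1, or_true, iff_true]
      · by_cases h2 : S x = Letter.star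
        · rw [hvS x h1 h2]
          simp only [h1, or_false]
          constructor
          · intro hc; exact absurd hc (by simp)
          · intro hc; rw [hc] at h2; exact absurd h2 (by simp)
        · rw [hvE x h1 h2]
          simp [h1]
    have hdisj : Disjoint (univ.filter fun i => S i = Letter.one) A := by
      rw [Finset.disjoint_left]
      intro x hx hx'
      simp only [mem_filter, mem_univ, true_and] at hx
      rw [hA x hx'] at hx
      exact absurd hx (by simp)
    rw [count1_card, hset, Finset.card_union_of_disjoint hdisj, ← count1_card]
    exact hcard
  · intro i hi
    have h1 : i ∉ A := fun hc => hi (hA i hc)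
    exact hvE i h1 hi

lemma vertexset_nonempty {S : FSeq n} (h1 : count1 S + 1 ≤ k)
    (h2 : k + 1 ≤ count1 S + countStar S) : ∃ v, v ∈ VertexSet k S := by
  have hstars : k - count1 S ≤ (univ.filter fun i => S i = Letter.star).card := by
    rw [← countStar_card]; omega
  obtain ⟨A, hA, hAcard⟩ := Finset.exists_subset_card_eq hstars
  exact ⟨_, vertex_of_fill (fun i hi => by simpa using hA hi) (by rw [hAcard]; omega)⟩

lemma vertexset_one_at {S : FSeq n} (h1 : count1 S + 1 ≤ k)
    (h2 : k + 1 ≤ count1 S + countStar S) {x : Fin n} (hx : S x = Letter.star) :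
    ∃ v ∈ VertexSet k S, v x = Letter.one := by
  have hx' : x ∈ univ.filter fun i => S i = Letter.star := by simp [hx]
  have hstars : k - count1 S ≤ (univ.filter fun i => S i = Letter.star).card := by
    rw [← countStar_card]; omega
  obtain ⟨A, hxA, hA, hAcard⟩ := Finset.exists_subsuperset_card_eq
    (Finset.singleton_subset_iff.mpr hx') (by rw [Finset.card_singleton]; omega) hstars
  have hmem := vertex_of_fill (k := k) (S := S) (A := A)
    (fun i hi => by simpa using hA hi) (by rw [hAcard]; omega)
  refine ⟨_, hmem, ?_⟩
  have hxmem : x ∈ A := hxA (by simp)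
  simp only [if_pos hxmem]

lemma vertexset_zero_at {S : FSeq n} (h1 : count1 S + 1 ≤ k)
    (h2 : k + 1 ≤ count1 S + countStar S) {x : Fin n} (hx : S x = Letter.star) :
    ∃ v ∈ VertexSet k S, v x = Letter.zero := by
  have hx' : x ∈ univ.filter fun i => S i = Letter.star := by simp [hx]
  have hstars : k - count1 S ≤ ((univ.filter fun i => S i = Letter.star).erase x).card := by
    rw [Finset.card_erase_of_mem hx', ← countStar_card]; omega
  obtain ⟨A, hA, hAcard⟩ := Finset.exists_subset_card_eq hstars
  have hxA : x ∉ A := fun hc => (Finset.mem_erase.mp (hA hc)).1 rfl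
  have hmem := vertex_of_fill (k := k) (S := S) (A := A)
    (fun i hi => by have := hA hi; simp only [Finset.mem_erase, mem_filter, mem_univ,
      true_and] at this; exact this.2)
    (by rw [hAcard]; omega)
  refine ⟨_, hmem, ?_⟩
  simp only [if_neg hxA, if_pos hx]

/-- a codimension-1 face of a face `b` of dimension ≥ 2 is obtained by filling one star -/
lemma fill_of_codim1 {T b : FSeq n} (hT : FaceSeq k T) (hb3 : 3 ≤ countStar b)
    (hcod : Codim1 k T b) :
    ∃ (w : Fin n) (v : Letter), b w = Letter.star ∧ v ≠ Letter.star ∧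
      T = Function.update b w v ∧ countStar T + 1 = countStar b := by
  obtain ⟨hsub', hdim⟩ := hcod
  have hsub : VertexSet k T ⊆ VertexSet k b := subset_of_ssubset hsub'
  have hfb : fdim b = countStar b - 1 := by unfold fdim; rw [if_neg (by omega)]
  have hfT : fdim T = countStar b - 2 := by omega
  have hTs : countStar T ≠ 0 := by
    intro hc
    unfold fdim at hfT
    rw [if_pos hc] at hfT
    omega
  have hfT2 : fdim T = countStar T - 1 := by unfold fdim; rw [if_neg hTs]
  have hcsT : countStar T + 1 = countStar b := by omega
  have hTface : count1 T + 1 ≤ k ∧ k + 1 ≤ count1 T + countStar T := by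
    rcases hT with ⟨hc, _⟩ | h
    · exact absurd hc hTs
    · exact h
  -- stars of T are stars of b
  have hstar_sub : ∀ x, T x = Letter.star → b x = Letter.star := by
    intro x hx
    by_contra hbx
    obtain ⟨v1, hv1, hv1x⟩ := vertexset_one_at hTface.1 hTface.2 hx
    obtain ⟨v0, hv0, hv0x⟩ := vertexset_zero_at hTface.1 hTface.2 hx
    have e1 : v1 x = b x := (hsub hv1).2.2 x hbx
    have e0 : v0 x = b x := (hsub hv0).2.2 x hbx
    rw [hv1x] at e1; rw [hv0x] at e0
    rw [← e1] at e0
    exact absurd e0 (by simp)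
  -- agreement off the stars of b
  obtain ⟨v0, hv0⟩ := vertexset_nonempty hTface.1 hTface.2
  have hagree : ∀ x, b x ≠ Letter.star → T x = b x := by
    intro x hbx
    have hTx : T x ≠ Letter.star := fun hc => hbx (hstar_sub x hc)
    have e1 : v0 x = T x := hv0.2.2 x hTx
    have e2 : v0 x = b x := (hsub hv0).2.2 x hbx
    rw [← e1, e2]
  -- the unique filled star
  have hsubF : (univ.filter fun i => T i = Letter.star) ⊆
      (univ.filter fun i => b i = Letter.star) := by
    intro x hx
    simp only [mem_filter, mem_univ, true_and] at *
    exact hstar_sub x hx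
  have hcsT' : (univ.filter fun i => T i = Letter.star).card + 1 =
      (univ.filter fun i => b i = Letter.star).card := by
    rw [← countStar_card, ← countStar_card]; exact hcsT
  have hcard1 : ((univ.filter fun i => b i = Letter.star) \
      (univ.filter fun i => T i = Letter.star)).card = 1 := by
    rw [Finset.card_sdiff_of_subset hsubF]
    omega
  obtain ⟨w, hw⟩ := Finset.card_eq_one.mp hcard1
  have hwmem : w ∈ (univ.filter fun i => b i = Letter.star) \
      (univ.filter fun i => T i = Letter.star) := by rw [hw]; simp
  simp only [Finset.mem_sdiff, mem_filter, mem_univ, true_and] at hwmem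
  refine ⟨w, T w, hwmem.1, hwmem.2, ?_, hcsT⟩
  funext x
  rcases eq_or_ne x w with rfl | hxw
  · rw [Function.update_self]
  · rw [Function.update_of_ne hxw]
    rcases eq_or_ne (b x) Letter.star with hbx | hbx
    · have hxb : x ∈ (univ.filter fun i => b i = Letter.star) := by simp [hbx]
      have hxs : x ∈ (univ.filter fun i => T i = Letter.star) := by
        by_contra hc
        have hmem : x ∈ (univ.filter fun i => b i = Letter.star) \
            (univ.filter fun i => T i = Letter.star) := Finset.mem_sdiff.mpr ⟨hxb, hc⟩
        rw [hw] at hmem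
        exact hxw (by simpa using hmem)
      simp only [mem_filter, mem_univ, true_and] at hxs
      rw [hxs, hbx]
    · exact hagree x hbx

/-- the dimension-0 case: a codimension-1 face of a face with exactly two stars is a vertex
compatible with it -/
lemma fill_of_codim1_dim0 {T b : FSeq n} (hT : FaceSeq k T) (hb2 : countStar b = 2)
    (hcod : Codim1 k T b) :
    countStar T = 0 ∧ count1 T = k ∧ ∀ x, b x ≠ Letter.star → T x = b x := by
  obtain ⟨hsub', hdim⟩ := hcod
  have hsub : VertexSet k T ⊆ VertexSet k b := subset_of_ssubset hsub'
  have hfb : fdim b = 1 := by unfold fdim; rw [if_neg (by omega)]; omega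
  have hfT : fdim T = 0 := by omega
  have hTs : countStar T = 0 := by
    by_contra hc
    have hfT2 : fdim T = countStar T - 1 := by unfold fdim; rw [if_neg hc]
    rcases hT with ⟨hcs, _⟩ | ⟨ha, hb⟩
    · exact hc hcs
    · omega
  have hc1 : count1 T = k := by
    rcases hT with ⟨_, hc⟩ | ⟨ha, hb⟩
    · exact hc
    · omega
  refine ⟨hTs, hc1, ?_⟩
  have hTv : T ∈ VertexSet k T := ⟨no_star_of_cnt_zero (by rw [← countStar_eq]; exact hTs),
    hc1, fun i _ => rfl⟩
  exact fun x hx => (hsub hTv).2.2 x hx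

end Fill
section TypeHelpers
open Finset

variable {n k m0 m1 : ℕ}

lemma count1_update_mem {S : FSeq n} {p : Fin n} {v : Letter}
    (h : S p = Letter.one) (hv : v ≠ Letter.one) :
    count1 (Function.update S p v) + 1 = count1 S := cnt_update_mem h hv

lemma count1_update_new {S : FSeq n} {p : Fin n} {v : Letter}
    (h : S p ≠ Letter.one) (hv : v = Letter.one) :
    count1 (Function.update S p v) = count1 S + 1 := cnt_update_new h hv

lemma count1_update_ne {S : FSeq n} {p : Fin n} {v : Letter}
    (h : S p ≠ Letter.one) (hv : v ≠ Letter.one) :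
    count1 (Function.update S p v) = count1 S := cnt_update_ne h hv

lemma count0_update_mem {S : FSeq n} {p : Fin n} {v : Letter}
    (h : S p = Letter.zero) (hv : v ≠ Letter.zero) :
    count0 (Function.update S p v) + 1 = count0 S := cnt_update_mem h hv

lemma count0_update_new {S : FSeq n} {p : Fin n} {v : Letter}
    (h : S p ≠ Letter.zero) (hv : v = Letter.zero) :
    count0 (Function.update S p v) = count0 S + 1 := cnt_update_new h hv

lemma count0_update_ne {S : FSeq n} {p : Fin n} {v : Letter}
    (h : S p ≠ Letter.zero) (hv : v ≠ Letter.zero) :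
    count0 (Function.update S p v) = count0 S := cnt_update_ne h hv

lemma countStar_update_mem {S : FSeq n} {p : Fin n} {v : Letter}
    (h : S p = Letter.star) (hv : v ≠ Letter.star) :
    countStar (Function.update S p v) + 1 = countStar S := cnt_update_mem h hv

lemma countStar_update_new {S : FSeq n} {p : Fin n} {v : Letter}
    (h : S p ≠ Letter.star) (hv : v = Letter.star) :
    countStar (Function.update S p v) = countStar S + 1 := cnt_update_new h hv

lemma countStar_update_ne {S : FSeq n} {p : Fin n} {v : Letter}
    (h : S p ≠ Letter.star) (hv : v ≠ Letter.star) :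
    countStar (Function.update S p v) = countStar S := cnt_update_ne h hv

lemma count_sum (S : FSeq n) : count0 S + count1 S + countStar S = n := cnt_partition S

lemma hasStar_count {S : FSeq n} (h : hasStar S) : countStar S ≠ 0 := (hasStar_iff S).mp h

lemma type1_facts (h : Type1 k m0 m1 S) : count1 S + 1 ≤ k ∧ OneRight S := by
  rcases h with ⟨h1, h2, _⟩ | ⟨h1, h2, _⟩ | ⟨h1, h2, _⟩ <;> exact ⟨h1, h2⟩

lemma type1_count0_ge {S : FSeq n} (h : Type1 k m0 m1 S) (hc : count1 S = m1) :
    m0 ≤ count0 S := by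
  rcases h with ⟨_, _, h3⟩ | ⟨_, _, _, h3⟩ | ⟨_, _, _, h3, _⟩
  · exact absurd hc h3
  · omega
  · omega

lemma not_type1_of_noOneRight {S : FSeq n} (hN : NoOneRight S) : ¬ Type1 k m0 m1 S :=
  fun h => oneRight_noOneRight (type1_facts h).2 hN

lemma not_type5_of_noOneRight {S : FSeq n} (hN : NoOneRight S) : ¬ Type5 m0 m1 S :=
  fun h => oneRight_noOneRight h.2.2.1 hN

lemma not_type5_of_noZeroLeft {S : FSeq n} (hN : NoZeroLeft S) : ¬ Type5 m0 m1 S :=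
  fun h => zeroLeft_noZeroLeft h.2.2.2 hN

lemma not_type3_of_noZeroLeft {S : FSeq n} (hN : NoZeroLeft S) : ¬ Type3 k S :=
  fun h => zeroLeft_noZeroLeft h.2.2.2 hN

lemma not_type7_of_noZeroLeft {S : FSeq n} (hN : NoZeroLeft S) : ¬ Type7 m0 m1 S :=
  fun h => zeroLeft_noZeroLeft h.2.2.2 hN

lemma refute_match {S b' : FSeq n} (hm : Vmatch k m0 m1 S b')
    (h1 : ¬ Type1 k m0 m1 S) (h3 : ¬ Type3 k S) (h5 : ¬ Type5 m0 m1 S)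
    (h7 : ¬ Type7 m0 m1 S) (h9 : ¬ Type9 k S) : False := by
  rcases hm.2 with ⟨h, _⟩ | ⟨h, _⟩ | ⟨h, _⟩ | ⟨h, _⟩ | ⟨h, _⟩
  exacts [h1 h, h3 h, h5 h, h7 h, h9 h]

/-- facts for a face sequence with a star -/
lemma faceseq_star {S : FSeq n} (hf : FaceSeq k S) (hs : hasStar S) :
    count1 S + 1 ≤ k ∧ k + 1 ≤ count1 S + countStar S ∧ 2 ≤ countStar S := by
  rcases hf with ⟨hc, _⟩ | ⟨h1, h2⟩
  · exact absurd hc (hasStar_count hs)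
  · refine ⟨h1, h2, ?_⟩
    have := hasStar_count hs
    omega

/-- a face sequence with stars cannot have `k` ones -/
lemma faceseq_no_k_ones {S : FSeq n} (hf : FaceSeq k S) (hc1 : count1 S = k)
    (hcs : 2 ≤ countStar S) : False := by
  rcases hf with ⟨hc, _⟩ | ⟨h1, h2⟩ <;> omega

/-- the positions of stars after an update that creates no star and destroys no star -/
lemma star_update_iff {S : FSeq n} {p : Fin n} {v : Letter}
    (hS : S p ≠ Letter.star) (hv : v ≠ Letter.star) (i : Fin n) :
    Function.update S p v i = Letter.star ↔ S i = Letter.star := by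
  rcases eq_or_ne i p with rfl | h
  · rw [Function.update_self]
    exact ⟨fun hc => absurd hc hv, fun hc => absurd hc hS⟩
  · rw [Function.update_of_ne h]

/-- the leftmost zero is smaller than the rightmost one for a non-`v₀` vertex -/
lemma leftzero_lt_rightone {a : FSeq n} {i j : Fin n} (hk1 : 1 ≤ k)
    (hc1 : count1 a = k) (hcs : countStar a = 0) (hne0 : a ≠ v0seq n k)
    (hi : IsLeftmostZero a i) (hj : IsRightmostOne a j) : i < j := by
  by_contra hc
  have hij : i ≠ j := by
    intro he
    have h0 := hi.1
    rw [he, hj.1] at h0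
    exact absurd h0 (by simp)
  have hji : j < i := lt_of_le_of_ne (le_of_not_gt hc) (Ne.symm hij)
  have hform : ∀ x, a x = if (x : ℕ) ≤ (j : ℕ) then Letter.one else Letter.zero := by
    intro x
    rcases letter_cases (a x) with hx | hx | hx
    · -- a x = zero : then i ≤ x, so j < x
      have hix : i ≤ x := zero_ge_leftmost hi hx
      have : ¬ ((x : ℕ) ≤ (j : ℕ)) := by
        have : (j : ℕ) < (i : ℕ) := hji
        have : (i : ℕ) ≤ (x : ℕ) := hix
        omega
      rw [if_neg this]; exact hx
    · have hxj : (x : ℕ) ≤ (j : ℕ) := one_le_rightmost hj hx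
      rw [if_pos hxj]; exact hx
    · exact absurd hx (no_star_of_cnt_zero (by rw [← countStar_eq]; exact hcs) x)
  have hones : (Finset.univ.filter fun x : Fin n => a x = Letter.one) = Finset.Iic j := by
    ext x
    simp only [mem_filter, mem_univ, true_and, Finset.mem_Iic]
    rw [hform x]
    split_ifs with h
    · simp only [true_iff]
      exact Fin.le_def.mpr h
    · constructor
      · intro hcon; exact absurd hcon (by simp)
      · intro hcon; exact absurd (Fin.le_def.mp hcon) h
  have hcard : count1 a = (j : ℕ) + 1 := by
    rw [count1_card, hones, Fin.card_Iic]
  apply hne0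
  funext x
  unfold v0seq
  rw [hform x]
  have hk : k = (j : ℕ) + 1 := by omega
  split_ifs with h1 h2 h2 <;> first | rfl | omega

end TypeHelpers
section Step
open Finset

variable {n k m0 m1 : ℕ}

lemma upd_upd {S : FSeq n} {p : Fin n} {u v : Letter} :
    Function.update (Function.update S p u) p v = Function.update S p v := by
  funext x
  rcases eq_or_ne x p with rfl | h
  · rw [Function.update_self, Function.update_self]
  · rw [Function.update_of_ne h, Function.update_of_ne h, Function.update_of_ne h]

/-- `S` has an outgoing path step whose landing face is matched -/
def StepFrom (k m0 m1 : ℕ) {n : ℕ} (S : FSeq n) : Prop :=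
  ∃ b' S'' b''' : FSeq n, Vmatch k m0 m1 S b' ∧ FaceSeq k b' ∧ FaceSeq k S'' ∧
    Codim1 k S'' b' ∧ S'' ≠ S ∧ Vmatch k m0 m1 S'' b'''

lemma step_dec (hk1 : 1 ≤ k) (hm11 : 1 ≤ m1) (hm12 : m1 + 1 ≤ k)
    {a b a' : FSeq n}
    (hfa : FaceSeq k a) (hfb : FaceSeq k b) (hfa' : FaceSeq k a')
    (hm : Vmatch k m0 m1 a b) (hc2 : Codim1 k a' b) (hne : a' ≠ a)
    (hsf : StepFrom k m0 m1 a') :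
    mu m0 m1 a' < mu m0 m1 a := by
  obtain ⟨hfsa, hcase⟩ := hm
  rcases hcase with ⟨ht1, happ⟩ | ⟨ht3, happ⟩ | ⟨ht5, happ⟩ | ⟨ht7, happ⟩ | ⟨ht9, happ⟩
  -- ================= CASE: a of type 1 =================
  · obtain ⟨p, hp, hbdef⟩ := happ
    subst hbdef
    obtain ⟨hc1k, hOR⟩ := type1_facts ht1
    have hap : a p = Letter.one := hp.1
    have hfs := faceseq_star hfa hOR.1
    have hcsb : countStar (Function.update a p Letter.star) = countStar a + 1 :=
      countStar_update_new (by rw [hap]; simp) rfl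
    obtain ⟨w, v, hbw, hv, ha'def, hcs'⟩ := fill_of_codim1 hfa' (by omega) hc2
    have hstlt : ∀ j2 : Fin n, a j2 = Letter.star → j2 < p :=
      fun j2 hj2 => star_lt_of_oneRight hp hOR hj2
    rcases eq_or_ne w p with heq | hwp
    · rw [heq] at hbw ha'def
      rw [upd_upd] at ha'def
      rcases letter_cases v with hv0 | hv1 | hvs
      · -- A move : replace the rightmost one by zero
        subst hv0
        have hps : psum Letter.one a' + (p : ℕ) = psum Letter.one a := by
          rw [ha'def]; exact psum_update_mem hap (by simp)
        have hrs : rsN a' = rsN a := by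
          rw [ha'def]
          exact rsN_congr (star_update_iff (by rw [hap]; simp) (by simp))
        obtain ⟨j0, hj0⟩ := hOR.1
        have hj0p : (j0 : ℕ) < (p : ℕ) := Fin.lt_def.mp (hstlt j0 hj0)
        have hrsle : rsN a ≤ (p : ℕ) - 1 :=
          rsN_le (fun j2 hj2 => by have := Fin.lt_def.mp (hstlt j2 hj2); omega)
        have hphi : phi m0 m1 a' ≤ 2 * ((p : ℕ) - 1) + 1 :=
          phi_le (by rw [hrs]; exact hrsle)
        apply mu_lt_of_fst_lt
        unfold fstc
        omega
      · subst hv1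
        rw [← hap, Function.update_eq_self] at ha'def
        exact absurd ha'def hne
      · exact absurd hvs hv
    · have haw : a w = Letter.star := by
        have h2 := hbw; rw [Function.update_of_ne hwp] at h2; exact h2
      have hwltp : w < p := hstlt w haw
      rcases letter_cases v with hv0 | hv1 | hvs
      · -- B move : kill, landing is never matched
        subst hv0
        obtain ⟨b2, S2, b3, hva', hfb2, hfS2, hcod2, hS2ne, hvS2⟩ := hsf
        have hc1b : count1 (Function.update a p Letter.star) + 1 = count1 a :=
          count1_update_mem hap (by simp)
        have hc1a' : count1 a' = count1 (Function.update a p Letter.star) := by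
          rw [ha'def]; exact count1_update_ne (by rw [hbw]; simp) (by simp)
        have hc0b : count0 (Function.update a p Letter.star) = count0 a :=
          count0_update_ne (by rw [hap]; simp) (by simp)
        have hc0a' : count0 a' = count0 (Function.update a p Letter.star) + 1 := by
          rw [ha'def]; exact count0_update_new (by rw [hbw]; simp) rfl
        have hNOR : NoOneRight a' := by rw [ha'def]; exact noOneRight_update hp hwltp
        exact (refute_match hva'
          (not_type1_of_noOneRight hNOR)
          (fun h3' => by have := h3'.1; omega)
          (not_type5_of_noOneRight hNOR)
          (fun h7' => by
            have he1 := h7'.1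
            have he2 := h7'.2.1
            have hca : count1 a = m1 := by omega
            have := type1_count0_ge ht1 hca
            omega)
          (fun h9' => by have := h9'.1; omega)).elim
      · -- C move : move the rightmost one onto a star to its left
        subst hv1
        have hpsb : psum Letter.one (Function.update a p Letter.star) + (p : ℕ) =
            psum Letter.one a := psum_update_mem hap (by simp)
        have hpsa' : psum Letter.one a' =
            psum Letter.one (Function.update a p Letter.star) + (w : ℕ) := by
          rw [ha'def]; exact psum_update_new (by rw [hbw]; simp) rfl
        have hNOR : NoOneRight a' := by rw [ha'def]; exact noOneRight_update hp hwltp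
        have hphi' : phi m0 m1 a' = 0 := phi_of_not_type5 (not_type5_of_noOneRight hNOR)
        apply mu_lt_of_fst_lt
        unfold fstc
        have hwp' : (w : ℕ) < (p : ℕ) := Fin.lt_def.mp hwltp
        omega
      · exact absurd hvs hv
  -- ================= CASE: a of type 3 =================
  · obtain ⟨l, hl, hbdef⟩ := happ
    subst hbdef
    have hc1a : count1 a + 1 = k := ht3.1
    have hNORa : NoOneRight a := ht3.2.2.1
    have hZLa : ZeroLeft a := ht3.2.2.2
    have hal : a l = Letter.zero := hl.1
    have hfs := faceseq_star hfa hZLa.1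
    have hcsb : countStar (Function.update a l Letter.star) = countStar a + 1 :=
      countStar_update_new (by rw [hal]; simp) rfl
    obtain ⟨w, v, hbw, hv, ha'def, hcs'⟩ := fill_of_codim1 hfa' (by omega) hc2
    rcases eq_or_ne w l with heq | hwl
    · rw [heq] at hbw ha'def
      rw [upd_upd] at ha'def
      rcases letter_cases v with hv0 | hv1 | hvs
      · subst hv0; rw [← hal, Function.update_eq_self] at ha'def
        exact absurd ha'def hne
      · subst hv1
        have hc1' : count1 a' = count1 a + 1 := by
          rw [ha'def]; exact count1_update_new (by rw [hal]; simp) rfl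
        exact (faceseq_no_k_ones hfa' (by omega) (by omega)).elim
      · exact absurd hvs hv
    · have haw : a w = Letter.star := by
        have h2 := hbw; rw [Function.update_of_ne hwl] at h2; exact h2
      have hlw : l < w := star_gt_of_zeroLeft hl hZLa haw
      rcases letter_cases v with hv0 | hv1 | hvs
      · -- E move
        subst hv0
        have hps1b : psum Letter.one (Function.update a l Letter.star) =
            psum Letter.one a := psum_update_ne (by rw [hal]; simp) (by simp)
        have hps1' : psum Letter.one a' =
            psum Letter.one (Function.update a l Letter.star) := by
          rw [ha'def]; exact psum_update_ne (by rw [hbw]; simp) (by simp)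
        have hphia : phi m0 m1 a = 0 := phi_of_not_type5 (not_type5_of_noOneRight hNORa)
        have hNZL : NoZeroLeft a' := by
          rw [ha'def]; exact noZeroLeft_update hl hZLa haw hwl
        have hphi' : phi m0 m1 a' = 0 := phi_of_not_type5 (not_type5_of_noZeroLeft hNZL)
        have hps0b : psum Letter.zero (Function.update a l Letter.star) + (l : ℕ) =
            psum Letter.zero a := psum_update_mem hal (by simp)
        have hps0' : psum Letter.zero a' =
            psum Letter.zero (Function.update a l Letter.star) + (w : ℕ) := by
          rw [ha'def]; exact psum_update_new (by rw [hbw]; simp) rfl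
        apply mu_lt_of_fst_eq
        · unfold fstc; omega
        · have := Fin.lt_def.mp hlw; omega
      · subst hv1
        have hc1b : count1 (Function.update a l Letter.star) = count1 a :=
          count1_update_ne (by rw [hal]; simp) (by simp)
        have hc1' : count1 a' = count1 a + 1 := by
          rw [ha'def, count1_update_new (by rw [hbw]; simp) rfl, hc1b]
        exact (faceseq_no_k_ones hfa' (by omega) (by omega)).elim
      · exact absurd hvs hv
  -- ================= CASE: a of type 5 =================
  · obtain ⟨l, hl, hbdef⟩ := happ
    subst hbdef
    have hc1a : count1 a = m1 := ht5.1
    have hORa : OneRight a := ht5.2.2.1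
    have hZLa : ZeroLeft a := ht5.2.2.2
    have hal : a l = Letter.zero := hl.1
    have hfs := faceseq_star hfa hORa.1
    have hcsb : countStar (Function.update a l Letter.star) = countStar a + 1 :=
      countStar_update_new (by rw [hal]; simp) rfl
    obtain ⟨w, v, hbw, hv, ha'def, hcs'⟩ := fill_of_codim1 hfa' (by omega) hc2
    have hphia : phi m0 m1 a = 2 * rsN a + 1 := phi_of_type5 ht5
    obtain ⟨j0, hj0⟩ := hORa.1
    have hlj0 : (l : ℕ) < (j0 : ℕ) := Fin.lt_def.mp (star_gt_of_zeroLeft hl hZLa hj0)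
    have hj0rs : (j0 : ℕ) ≤ rsN a := le_rsN hj0
    rcases eq_or_ne w l with heq | hwl
    · rw [heq] at hbw ha'def
      rw [upd_upd] at ha'def
      rcases letter_cases v with hv0 | hv1 | hvs
      · subst hv0; rw [← hal, Function.update_eq_self] at ha'def
        exact absurd ha'def hne
      · -- D move
        subst hv1
        have hps1' : psum Letter.one a' = psum Letter.one a + (l : ℕ) := by
          rw [ha'def]; exact psum_update_new (by rw [hal]; simp) rfl
        have hc1' : count1 a' = count1 a + 1 := by
          rw [ha'def]; exact count1_update_new (by rw [hal]; simp) rfl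
        have hphi' : phi m0 m1 a' = 0 :=
          phi_of_not_type5 (fun h5' => by have := h5'.1; omega)
        apply mu_lt_of_fst_lt
        unfold fstc
        omega
      · exact absurd hvs hv
    · have haw : a w = Letter.star := by
        have h2 := hbw; rw [Function.update_of_ne hwl] at h2; exact h2
      have hwrs : (w : ℕ) ≤ rsN a := le_rsN haw
      rcases letter_cases v with hv0 | hv1 | hvs
      · -- E move
        subst hv0
        have hps1b : psum Letter.one (Function.update a l Letter.star) =
            psum Letter.one a := psum_update_ne (by rw [hal]; simp) (by simp)
        have hps1' : psum Letter.one a' =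
            psum Letter.one (Function.update a l Letter.star) := by
          rw [ha'def]; exact psum_update_ne (by rw [hbw]; simp) (by simp)
        have hNZL : NoZeroLeft a' := by
          rw [ha'def]; exact noZeroLeft_update hl hZLa haw hwl
        have hphi' : phi m0 m1 a' = 0 := phi_of_not_type5 (not_type5_of_noZeroLeft hNZL)
        apply mu_lt_of_fst_lt
        unfold fstc
        omega
      · -- F move
        subst hv1
        have hps1b : psum Letter.one (Function.update a l Letter.star) =
            psum Letter.one a := psum_update_ne (by rw [hal]; simp) (by simp)
        have hps1' : psum Letter.one a' =
            psum Letter.one (Function.update a l Letter.star) + (w : ℕ) := by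
          rw [ha'def]; exact psum_update_new (by rw [hbw]; simp) rfl
        have hc1b : count1 (Function.update a l Letter.star) = count1 a :=
          count1_update_ne (by rw [hal]; simp) (by simp)
        have hc1' : count1 a' = count1 a + 1 := by
          rw [ha'def, count1_update_new (by rw [hbw]; simp) rfl, hc1b]
        have hphi' : phi m0 m1 a' = 0 :=
          phi_of_not_type5 (fun h5' => by have := h5'.1; omega)
        apply mu_lt_of_fst_lt
        unfold fstc
        omega
      · exact absurd hvs hv
  -- ================= CASE: a of type 7 =================
  · obtain ⟨l, hl, hbdef⟩ := happ
    subst hbdef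
    have hc1a : count1 a + 1 = m1 := ht7.1
    have hc0a : count0 a ≤ m0 := ht7.2.1
    have hNORa : NoOneRight a := ht7.2.2.1
    have hZLa : ZeroLeft a := ht7.2.2.2
    have hal : a l = Letter.zero := hl.1
    have hfs := faceseq_star hfa hZLa.1
    have hcsb : countStar (Function.update a l Letter.star) = countStar a + 1 :=
      countStar_update_new (by rw [hal]; simp) rfl
    obtain ⟨w, v, hbw, hv, ha'def, hcs'⟩ := fill_of_codim1 hfa' (by omega) hc2
    rcases eq_or_ne w l with heq | hwl
    · rw [heq] at hbw ha'def
      rw [upd_upd] at ha'def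
      rcases letter_cases v with hv0 | hv1 | hvs
      · subst hv0; rw [← hal, Function.update_eq_self] at ha'def
        exact absurd ha'def hne
      · -- D move from type 7 : the landing face is a dead end, contradiction
        subst hv1
        obtain ⟨b2, S2, b3, hva', hfb2, hfS2, hcod2, hS2ne, hvS2⟩ := hsf
        have hc1' : count1 a' = count1 a + 1 := by
          rw [ha'def]; exact count1_update_new (by rw [hal]; simp) rfl
        have hc0' : count0 a' + 1 = count0 a := by
          rw [ha'def]; exact count0_update_mem hal (by simp)
        have hNOR' : NoOneRight a' := by
          rw [ha'def]; exact noOneRight_update_one hal hNORa hZLa hl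
        have hcsa' : countStar a' = countStar a := by
          rw [ha'def]; exact countStar_update_ne (by rw [hal]; simp) (by simp)
        -- determine the match of a' : it must be type 3
        rcases hva'.2 with ⟨h1', _⟩ | ⟨h3', happ2⟩ | ⟨h5', _⟩ | ⟨h7', _⟩ | ⟨h9', _⟩
        · exact (not_type1_of_noOneRight hNOR' h1').elim
        · -- a' of type 3; examine the forced next step
          have hm1k : m1 + 1 = k := by have := h3'.1; omega
          have hZL' : ZeroLeft a' := h3'.2.2.2
          obtain ⟨l2, hl2, hb2def⟩ := happ2
          subst hb2def
          have ha'l2 : a' l2 = Letter.zero := hl2.1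
          have hcsb2 : countStar (Function.update a' l2 Letter.star) = countStar a' + 1 :=
            countStar_update_new (by rw [ha'l2]; simp) rfl
          obtain ⟨w2, v2, hb2w, hv2, hS2def, hcs2'⟩ :=
            fill_of_codim1 hfS2 (by omega) hcod2
          rcases eq_or_ne w2 l2 with heq2 | hw2l
          · rw [heq2] at hb2w hS2def
            rw [upd_upd] at hS2def
            rcases letter_cases v2 with hv20 | hv21 | hv2s
            · subst hv20; rw [← ha'l2, Function.update_eq_self] at hS2def
              exact absurd hS2def hS2ne
            · subst hv21
              have hc1S2 : count1 S2 = count1 a' + 1 := by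
                rw [hS2def]; exact count1_update_new (by rw [ha'l2]; simp) rfl
              exact (faceseq_no_k_ones hfS2 (by omega) (by omega)).elim
            · exact absurd hv2s hv2
          · have ha'w2 : a' w2 = Letter.star := by
              have h2 := hb2w; rw [Function.update_of_ne hw2l] at h2; exact h2
            rcases letter_cases v2 with hv20 | hv21 | hv2s
            · -- the forced E move lands on an unmatched face
              subst hv20
              have hc1b2 : count1 (Function.update a' l2 Letter.star) = count1 a' :=
                count1_update_ne (by rw [ha'l2]; simp) (by simp)
              have hc1S2 : count1 S2 = count1 a' := by
                rw [hS2def, count1_update_ne (by rw [hb2w]; simp) (by simp), hc1b2]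
              have hc0b2 : count0 (Function.update a' l2 Letter.star) + 1 = count0 a' :=
                count0_update_mem ha'l2 (by simp)
              have hc0S2 : count0 S2 = count0 a' := by
                rw [hS2def, count0_update_new (by rw [hb2w]; simp) rfl]
                omega
              have hNZLS2 : NoZeroLeft S2 := by
                rw [hS2def]; exact noZeroLeft_update hl2 hZL' ha'w2 hw2l
              exact (refute_match hvS2
                (fun h1'' => by
                  rcases h1'' with ⟨_, _, hx⟩ | ⟨_, _, _, hx⟩ | ⟨_, _, _, hx, _⟩
                  · exact hx (by omega)
                  · omega
                  · omega)
                (not_type3_of_noZeroLeft hNZLS2)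
                (not_type5_of_noZeroLeft hNZLS2)
                (fun h7'' => by have := h7''.1; omega)
                (fun h9'' => by have := h9''.1; omega)).elim
            · subst hv21
              have hc1b2 : count1 (Function.update a' l2 Letter.star) = count1 a' :=
                count1_update_ne (by rw [ha'l2]; simp) (by simp)
              have hc1S2 : count1 S2 = count1 a' + 1 := by
                rw [hS2def, count1_update_new (by rw [hb2w]; simp) rfl, hc1b2]
              exact (faceseq_no_k_ones hfS2 (by omega) (by omega)).elim
            · exact absurd hv2s hv2
        · exact (not_type5_of_noOneRight hNOR' h5').elim
        · have := h7'.1; omega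
        · have := h9'.1; omega
      · exact absurd hvs hv
    · have haw : a w = Letter.star := by
        have h2 := hbw; rw [Function.update_of_ne hwl] at h2; exact h2
      have hlw : l < w := star_gt_of_zeroLeft hl hZLa haw
      rcases letter_cases v with hv0 | hv1 | hvs
      · -- E move
        subst hv0
        have hps1b : psum Letter.one (Function.update a l Letter.star) =
            psum Letter.one a := psum_update_ne (by rw [hal]; simp) (by simp)
        have hps1' : psum Letter.one a' =
            psum Letter.one (Function.update a l Letter.star) := by
          rw [ha'def]; exact psum_update_ne (by rw [hbw]; simp) (by simp)
        have hphia : phi m0 m1 a = 0 := phi_of_not_type5 (not_type5_of_noOneRight hNORa)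
        have hNZL : NoZeroLeft a' := by
          rw [ha'def]; exact noZeroLeft_update hl hZLa haw hwl
        have hphi' : phi m0 m1 a' = 0 := phi_of_not_type5 (not_type5_of_noZeroLeft hNZL)
        have hps0b : psum Letter.zero (Function.update a l Letter.star) + (l : ℕ) =
            psum Letter.zero a := psum_update_mem hal (by simp)
        have hps0' : psum Letter.zero a' =
            psum Letter.zero (Function.update a l Letter.star) + (w : ℕ) := by
          rw [ha'def]; exact psum_update_new (by rw [hbw]; simp) rfl
        apply mu_lt_of_fst_eq
        · unfold fstc; omega
        · have := Fin.lt_def.mp hlw; omega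
      · -- F move from type 7 : landing never matched
        subst hv1
        obtain ⟨b2, S2, b3, hva', hfb2, hfS2, hcod2, hS2ne, hvS2⟩ := hsf
        have hc1b : count1 (Function.update a l Letter.star) = count1 a :=
          count1_update_ne (by rw [hal]; simp) (by simp)
        have hc1' : count1 a' = count1 a + 1 := by
          rw [ha'def, count1_update_new (by rw [hbw]; simp) rfl, hc1b]
        have hc0b : count0 (Function.update a l Letter.star) + 1 = count0 a :=
          count0_update_mem hal (by simp)
        have hc0' : count0 a' + 1 = count0 a := by
          rw [ha'def, count0_update_ne (by rw [hbw]; simp) (by simp)]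
          omega
        have hNZL : NoZeroLeft a' := by
          rw [ha'def]; exact noZeroLeft_update hl hZLa haw hwl
        exact (refute_match hva'
          (fun h1'' => by
            rcases h1'' with ⟨_, _, hx⟩ | ⟨_, _, _, hx⟩ | ⟨_, _, _, hx, _⟩
            · exact hx (by omega)
            · omega
            · omega)
          (not_type3_of_noZeroLeft hNZL)
          (not_type5_of_noZeroLeft hNZL)
          (fun h7'' => by have := h7''.1; omega)
          (fun h9'' => by have := h9''.1; omega)).elim
      · exact absurd hvs hv
  -- ================= CASE: a of type 9 =================
  · obtain ⟨i, j, hi, hj, hbdef⟩ := happ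
    subst hbdef
    have hai : a i = Letter.zero := hi.1
    have haj : a j = Letter.one := hj.1
    have hij : i ≠ j := by
      intro he; rw [he, haj] at hai; exact absurd hai (by simp)
    have hcsa : countStar a = 0 := by
      have := count_sum a
      have h1 := ht9.1
      have h2 := ht9.2.1
      omega
    have hcsin : countStar (Function.update a i Letter.star) = countStar a + 1 :=
      countStar_update_new (by rw [hai]; simp) rfl
    have hinj : Function.update a i Letter.star j = Letter.one := by
      rw [Function.update_of_ne (Ne.symm hij)]; exact haj
    have hcsb : countStar (Function.update (Function.update a i Letter.star) j Letter.star)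
        = 2 := by
      rw [countStar_update_new (by rw [hinj]; simp) rfl]
      omega
    obtain ⟨hcs0, hc1', hagree⟩ := fill_of_codim1_dim0 hfa' hcsb hc2
    have hnost : ∀ x, a x ≠ Letter.star :=
      no_star_of_cnt_zero (by rw [← countStar_eq]; exact hcsa)
    have hnost' : ∀ x, a' x ≠ Letter.star :=
      no_star_of_cnt_zero (by rw [← countStar_eq]; exact hcs0)
    have hax : ∀ x, x ≠ i → x ≠ j → a' x = a x := by
      intro x hxi hxj
      have hbx : Function.update (Function.update a i Letter.star) j Letter.star x = a x := by
        rw [Function.update_of_ne hxj, Function.update_of_ne hxi]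
      rw [← hbx]
      exact hagree x (by rw [hbx]; exact hnost x)
    have ha'form : a' = Function.update (Function.update a i (a' i)) j (a' j) := by
      funext x
      rcases eq_or_ne x j with rfl | hxj
      · rw [Function.update_self]
      · rw [Function.update_of_ne hxj]
        rcases eq_or_ne x i with rfl | hxi
        · rw [Function.update_self]
        · rw [Function.update_of_ne hxi]
          exact hax x hxi hxj
    rcases letter_cases (a' i) with hvi | hvi | hvi
    · -- a' i = 0 : then a' j must be 1 and a' = a, contradiction
      rcases letter_cases (a' j) with hvj | hvj | hvj
      · -- (0,0) : count1 drops
        rw [hvi, hvj] at ha'form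
        have hinner : Function.update a i Letter.zero = a := by
          have h0 := Function.update_eq_self i a
          rw [hai] at h0; exact h0
        rw [hinner] at ha'form
        have : count1 a' + 1 = count1 a := by
          rw [ha'form]; exact count1_update_mem haj (by simp)
        have h1 := ht9.1
        omega
      · -- (0,1) : a' = a
        rw [hvi, hvj] at ha'form
        have hinner : Function.update a i Letter.zero = a := by
          have h0 := Function.update_eq_self i a
          rw [hai] at h0; exact h0
        have houter : Function.update a j Letter.one = a := by
          have h0 := Function.update_eq_self j a
          rw [haj] at h0; exact h0
        rw [hinner, houter] at ha'form
        exact absurd ha'form hne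
      · exact absurd hvj (hnost' j)
    · rcases letter_cases (a' j) with hvj | hvj | hvj
      · -- (1,0) : the swap, measure decreases
        rw [hvi, hvj] at ha'form
        have hilj : i < j :=
          leftzero_lt_rightone hk1 ht9.1 hcsa ht9.2.2 hi hj
        have hups : psum Letter.one (Function.update a i Letter.one) =
            psum Letter.one a + (i : ℕ) := psum_update_new (by rw [hai]; simp) rfl
        have huj : Function.update a i Letter.one j = Letter.one := by
          rw [Function.update_of_ne (Ne.symm hij)]; exact haj
        have hps' : psum Letter.one a' + (j : ℕ) =
            psum Letter.one a + (i : ℕ) := by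
          rw [ha'form, ← hups]
          exact psum_update_mem huj (by simp)
        have hphia : phi m0 m1 a = 0 :=
          phi_of_not_type5 (fun h5 => hasStar_count h5.2.2.1.1 hcsa)
        have hphi' : phi m0 m1 a' = 0 :=
          phi_of_not_type5 (fun h5 => hasStar_count h5.2.2.1.1 hcs0)
        apply mu_lt_of_fst_lt
        unfold fstc
        have := Fin.lt_def.mp hilj
        omega
      · -- (1,1) : count1 grows
        rw [hvi, hvj] at ha'form
        have huj : Function.update a i Letter.one j = Letter.one := by
          rw [Function.update_of_ne (Ne.symm hij)]; exact haj
        have houter : Function.update (Function.update a i Letter.one) j Letter.one =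
            Function.update a i Letter.one := by
          have h0 := Function.update_eq_self j (Function.update a i Letter.one)
          rw [huj] at h0; exact h0
        rw [houter] at ha'form
        have : count1 a' = count1 a + 1 := by
          rw [ha'form]; exact count1_update_new (by rw [hai]; simp) rfl
        have h1 := ht9.1
        omega
      · exact absurd hvj (hnost' j)
    · exact absurd hvi (hnost' i)

end Step
theorem matching_acyclic' (n k : ℕ) (hk1 : 1 ≤ k) (hk2 : k ≤ n - 1) :
    ∀ m0 m1 : ℕ, m0 + k + 1 ≤ n → 1 ≤ m1 → m1 + 1 ≤ k →
      ∀ (r : ℕ) (P : VPath n k m0 m1 r), P.a 0 ≠ P.a (Fin.last (r + 1)) := by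
  intro m0 m1 hm0 hm11 hm12 r P hclosed
  -- every face of the closed path is the source of some step
  have hsrc : ∀ m : Fin (r + 2), ∃ j : Fin (r + 1), P.a j.castSucc = P.a m := by
    intro m
    rcases lt_or_ge (m : ℕ) (r + 1) with h | h
    · exact ⟨⟨(m : ℕ), h⟩, by congr 1⟩
    · have hm : m = Fin.last (r + 1) := by
        apply Fin.ext
        have := m.isLt
        simp only [Fin.val_last]
        omega
      refine ⟨0, ?_⟩
      rw [hm, ← hclosed]
      congr 1
  have hmatched : ∀ m : Fin (r + 2), ∃ bb, Vmatch k m0 m1 (P.a m) bb := by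
    intro m
    obtain ⟨j, hj⟩ := hsrc m
    exact ⟨P.b j, hj ▸ P.mem j⟩
  have hstepfrom : ∀ m : Fin (r + 2), StepFrom k m0 m1 (P.a m) := by
    intro m
    obtain ⟨j, hj⟩ := hsrc m
    obtain ⟨bb, hbb⟩ := hmatched j.succ
    refine ⟨P.b j, P.a j.succ, bb, ?_, P.face_b j, P.face_a j.succ, P.codim_right j, ?_, hbb⟩
    · rw [← hj]; exact P.mem j
    · rw [← hj]; exact (P.step_ne j).symm
  have hdec : ∀ j : Fin (r + 1),
      mu m0 m1 (P.a j.succ) < mu m0 m1 (P.a j.castSucc) := fun j =>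
    step_dec hk1 hm11 hm12 (P.face_a j.castSucc) (P.face_b j) (P.face_a j.succ)
      (P.mem j) (P.codim_right j) (P.step_ne j).symm (hstepfrom j.succ)
  have hchain : ∀ m : Fin (r + 2), mu m0 m1 (P.a m) + (m : ℕ) ≤ mu m0 m1 (P.a 0) := by
    intro m
    induction m using Fin.induction with
    | zero => simp
    | succ i ih =>
      have h1 := hdec i
      have h2 : ((i.succ : Fin (r + 2)) : ℕ) = (i : ℕ) + 1 := Fin.val_succ i
      have h3 : ((i.castSucc : Fin (r + 2)) : ℕ) = (i : ℕ) := Fin.coe_castSucc i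
      omega
  have hfin := hchain (Fin.last (r + 1))
  rw [← hclosed] at hfin
  simp only [Fin.val_last] at hfin
  omega

/-- For all admissible `m₀, m₁`, the matching `V` is acyclic: there is
no nontrivial closed `V`-path. -/
theorem matching_acyclic (n k : ℕ) (hk1 : 1 ≤ k) (hk2 : k ≤ n - 1) :
    ∀ m0 m1 : ℕ, m0 + k + 1 ≤ n → 1 ≤ m1 → m1 + 1 ≤ k →
      ∀ (r : ℕ) (P : VPath n k m0 m1 r), P.a 0 ≠ P.a (Fin.last (r + 1)) :=
  matching_acyclic' n k hk1 hk2
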